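/- Let w ∈ ℝ^D with w ≠ 0 and let sgn(w) ∈ {±1}^D be defined componentwise by sgn(w)_j = 1 if w_j ≥ 0 and -1 otherwise. Then over all z of the form z = a·q with a ≥ 0 a scalar and q ∈ {±1}^D, the Euclidean distance ‖z - w‖ is minimized by a* = (Σ_j |w_j|)/D and q* = sgn(w). -/

import Mathlib

theorem statement7 (D : ℕ) (w : EuclideanSpace ℝ (Fin D)) (hw : w ≠ 0)
    (sgnw : EuclideanSpace ℝ (Fin D))
    (hsgn : ∀ j, sgnw j = if 0 ≤ w j then 1 else -1) :
    ∀ (a : ℝ), 0 ≤ a → ∀ q : EuclideanSpace ℝ (Fin D),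
      (∀ j, q j = 1 ∨ q j = -1) →
      ‖((∑ j, |w j|) / D) • sgnw - w‖ ≤ ‖a • q - w‖ := by
  intro a ha q hq
  have hD : 0 < D := by
    rcases Nat.eq_zero_or_pos D with h | h
    · subst h; exact absurd (PiLp.ext fun j => j.elim0) hw
    · exact h
  have hDR : (0:ℝ) < D := Nat.cast_pos.mpr hD
  set S := ∑ j, |w j| with hS
  set c := S / (D:ℝ) with hc
  rw [EuclideanSpace.norm_eq, EuclideanSpace.norm_eq]
  apply Real.sqrt_le_sqrt
  have key : ∀ j, ‖(c • sgnw - w) j‖ ^ 2 = c^2 - 2*c*|w j| + (w j)^2 := by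
    intro j
    have hs : sgnw j * w j = |w j| := by
      rw [hsgn j]; rcases le_or_gt 0 (w j) with h | h
      · simp [h, abs_of_nonneg h]
      · rw [if_neg (not_le.mpr h), abs_of_neg h]; ring
    have hs2 : sgnw j ^ 2 = 1 := by
      rw [hsgn j]; split <;> ring
    simp only [PiLp.sub_apply, PiLp.smul_apply, smul_eq_mul, Real.norm_eq_abs, sq_abs]
    linear_combination c^2 * hs2 - 2*c*hs
  have key2 : ∀ j, a^2 - 2*a*|w j| + (w j)^2 ≤ ‖(a • q - w) j‖ ^ 2 := by
    intro j
    have hq2 : q j ^ 2 = 1 := by rcases hq j with h | h <;> rw [h] <;> ring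
    have hqw : q j * w j ≤ |w j| := by
      rcases hq j with h | h <;> rw [h]
      · rw [one_mul]; exact le_abs_self _
      · rw [neg_one_mul]; exact neg_le_abs (w j)
    simp only [PiLp.sub_apply, PiLp.smul_apply, smul_eq_mul, Real.norm_eq_abs, sq_abs]
    nlinarith [mul_le_mul_of_nonneg_left hqw ha]
  have h1 : ∀ b : ℝ, ∑ j : Fin D, (b^2 - 2*b*|w j| + (w j)^2)
      = D * b^2 - 2*b*S + ∑ j, (w j)^2 := by
    intro b
    rw [Finset.sum_add_distrib, Finset.sum_sub_distrib, Finset.sum_const,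
      Finset.card_univ, Fintype.card_fin, nsmul_eq_mul, ← Finset.mul_sum, hS]
  calc ∑ j, ‖(c • sgnw - w) j‖ ^ 2 = ∑ j, (c^2 - 2*c*|w j| + (w j)^2) := by
        simp_rw [key]
    _ ≤ ∑ j, (a^2 - 2*a*|w j| + (w j)^2) := by
        rw [h1, h1]
        have hcd : (D:ℝ) * c = S := by rw [hc]; field_simp [hDR.ne']
        nlinarith [sq_nonneg ((D:ℝ)*a - S), hcd, hDR]
    _ ≤ ∑ j, ‖(a • q - w) j‖ ^ 2 := Finset.sum_le_sum (fun j _ => key2 j)
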